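/- Let G = (X ∪ Y, E) be a bipartite graph, let D = (<_X, <_Y) be a 2-layer k-planar drawing of G, and let S ⊆ X be a set of 2k+1 vertices that appear consecutively in <_X among the vertices of X. Let x be the <_X-minimum and x' the <_X-maximum vertex of S. Then for every connected component C of the graph G with the closed neighborhood N[S] removed, the vertices of C ∩ X either all satisfy v <_X x or all satisfy x' <_X v. -/

import Mathlib

open Function

/-- Two edges of a 2-layer drawing cross. -/
def cross2 {X Y : Type*} (πX : X → ℕ) (πY : Y → ℕ) (e f : X × Y) : Prop :=
  (πX e.1 < πX f.1 ∧ πY f.2 < πY e.2) ∨ (πX f.1 < πX e.1 ∧ πY e.2 < πY f.2)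

/-- A 2-layer drawing is `k`-planar: every edge is crossed by at most `k` edges. -/
def TwoLayerKPlanar {X Y : Type*} (k : ℕ) (πX : X → ℕ) (πY : Y → ℕ)
    (E : Set (X × Y)) : Prop :=
  ∀ e ∈ E, {f | f ∈ E ∧ cross2 πX πY e f}.ncard ≤ k

/-- The bipartite graph on `X ⊕ Y` determined by the edge set `E ⊆ X × Y`. -/
def twoLayerGraph {X Y : Type*} (E : Set (X × Y)) : SimpleGraph (X ⊕ Y) where
  Adj a b := (∃ x y, (x, y) ∈ E ∧ a = Sum.inl x ∧ b = Sum.inr y) ∨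
             (∃ x y, (x, y) ∈ E ∧ a = Sum.inr y ∧ b = Sum.inl x)
  symm := by
    constructor
    rintro a b (⟨x, y, h, rfl, rfl⟩ | ⟨x, y, h, rfl, rfl⟩)
    · exact Or.inr ⟨x, y, h, rfl, rfl⟩
    · exact Or.inl ⟨x, y, h, rfl, rfl⟩
  loopless := by
    constructor
    rintro a (⟨x, y, h, rfl, h2⟩ | ⟨x, y, h, rfl, h2⟩) <;> simp at h2

/-- Closed neighborhood (in the bipartite graph given by `E`) of a set `S ⊆ X`. -/
def closedNbhd {X Y : Type*} (E : Set (X × Y)) (S : Set X) : Set (X ⊕ Y) :=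
  {z | (∃ x ∈ S, z = Sum.inl x) ∨ (∃ y : Y, (∃ x ∈ S, (x, y) ∈ E) ∧ z = Sum.inr y)}

/-- In a 2-layer `k`-planar drawing, a set `S` of `2k+1` consecutive vertices of
the `X`-layer separates: every connected set `C` of vertices avoiding `N[S]`
has its `X`-vertices entirely to the left of `S` or entirely to its right. -/
theorem stmt3 {X Y : Type*} [Fintype X] [Fintype Y] (E : Set (X × Y)) (k : ℕ)
    (πX : X → ℕ) (πY : Y → ℕ) (hπX : Injective πX) (hπY : Injective πY)
    (hdeg : ∀ x : X, ∃ y : Y, (x, y) ∈ E)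
    (hpl : TwoLayerKPlanar k πX πY E)
    (S : Finset X) (hcard : S.card = 2 * k + 1)
    (hconsec : ∀ x1 ∈ S, ∀ x2 ∈ S, ∀ z : X, πX x1 < πX z → πX z < πX x2 → z ∈ S)
    (xmin xmax : X) (hmin : xmin ∈ S) (hmax : xmax ∈ S)
    (hminLe : ∀ s ∈ S, πX xmin ≤ πX s) (hmaxLe : ∀ s ∈ S, πX s ≤ πX xmax)
    (C : Set (X ⊕ Y))
    (hCdisj : ∀ z ∈ C, z ∉ closedNbhd E (↑S : Set X))
    (hCconn : ((twoLayerGraph E).induce C).Connected) :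
    (∀ x : X, Sum.inl x ∈ C → πX x < πX xmin) ∨
    (∀ x : X, Sum.inl x ∈ C → πX xmax < πX x) := by

  classical
  choose yc hyc using hdeg
  -- any X-vertex not in S is strictly left of xmin or strictly right of xmax
  have hside : ∀ x : X, x ∉ S → πX x < πX xmin ∨ πX xmax < πX x := by
    intro x hx
    by_contra h
    push_neg at h
    obtain ⟨h1, h2⟩ := h
    rcases lt_or_eq_of_le h1 with h1 | h1
    · rcases lt_or_eq_of_le h2 with h2 | h2
      · exact hx (hconsec xmin hmin xmax hmax x h1 h2)
      · have : x = xmax := hπX h2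
        exact hx (this ▸ hmax)
    · have : xmin = x := hπX h1
      exact hx (this ▸ hmin)
  -- key crossing-counting lemma
  have hkey : ∀ y : Y, (∀ s ∈ S, (s, y) ∉ E) →
      ∀ x x' : X, (x, y) ∈ E → (x', y) ∈ E →
      πX x < πX xmin → πX xmax < πX x' → False := by
    intro y hyN x x' he he' hxl hxr
    set A := {f | f ∈ E ∧ cross2 πX πY (x, y) f} with hAdef
    set B := {f | f ∈ E ∧ cross2 πX πY (x', y) f} with hBdef
    have hA : A.ncard ≤ k := hpl (x, y) he
    have hB : B.ncard ≤ k := hpl (x', y) he'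
    have hmap : ∀ s ∈ (S : Set X), (s, yc s) ∈ A ∪ B := by
      intro s hs
      have hsS : s ∈ S := hs
      have hsne : yc s ≠ y := fun h => hyN s hsS (h ▸ hyc s)
      have h1 : πX x < πX s := lt_of_lt_of_le hxl (hminLe s hsS)
      have h2 : πX s < πX x' := lt_of_le_of_lt (hmaxLe s hsS) hxr
      rcases (hπY.ne hsne).lt_or_gt with h | h
      · exact Set.mem_union_left _ ⟨hyc s, Or.inl ⟨h1, h⟩⟩
      · exact Set.mem_union_right _ ⟨hyc s, Or.inr ⟨h2, h⟩⟩
    have hinj : Set.InjOn (fun s => (s, yc s)) (S : Set X) := by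
      intro a _ b _ h
      exact congrArg Prod.fst h
    have hle : (S : Set X).ncard ≤ (A ∪ B).ncard :=
      Set.ncard_le_ncard_of_injOn _ hmap hinj (Set.toFinite _)
    have hun : (A ∪ B).ncard ≤ A.ncard + B.ncard := Set.ncard_union_le A B
    have hS : (S : Set X).ncard = 2 * k + 1 := by
      rw [Set.ncard_coe_finset]; exact hcard
    omega
  -- membership consequences of avoiding the closed neighborhood
  have hnotS : ∀ x : X, Sum.inl x ∈ C → x ∉ S := by
    intro x hx hxS
    exact hCdisj _ hx (Or.inl ⟨x, hxS, rfl⟩)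
  have hyC : ∀ y : Y, Sum.inr y ∈ C → ∀ s ∈ S, (s, y) ∉ E := by
    intro y hy s hs hse
    exact hCdisj _ hy (Or.inr ⟨y, ⟨s, hs, hse⟩, rfl⟩)
  -- the invariant
  let good : X ⊕ Y → Prop := fun z =>
    match z with
    | Sum.inl x => πX x < πX xmin
    | Sum.inr y => ∀ x' : X, (x', y) ∈ E → πX x' < πX xmin
  have hstep : ∀ u v : ↥C, ((twoLayerGraph E).induce C).Adj u v →
      good u.1 → good v.1 := by
    intro u v h hu
    have h' : (twoLayerGraph E).Adj u.1 v.1 := h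
    rcases h' with ⟨a, b, hab, hua, hvb⟩ | ⟨a, b, hab, hub, hva⟩
    · -- u = inl a, v = inr b
      rw [hua] at hu
      rw [hvb]
      intro x' hx'
      have hbC : Sum.inr b ∈ C := hvb ▸ v.2
      have hx'S : x' ∉ S := fun hxs => hyC b hbC x' hxs hx'
      rcases hside x' hx'S with hl | hr
      · exact hl
      · exact absurd (hkey b (hyC b hbC) a x' hab hx' hu hr) not_false
    · -- u = inr b, v = inl a
      rw [hub] at hu
      rw [hva]
      exact hu a hab
  have hwalk : ∀ u v : ↥C, ((twoLayerGraph E).induce C).Reachable u v →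
      good u.1 → good v.1 := by
    intro u v huv
    obtain ⟨w⟩ := huv
    induction w with
    | nil => exact id
    | cons h p ih => intro hu; exact ih (hstep _ _ h hu)
  by_contra hcon
  push_neg at hcon
  obtain ⟨⟨a, haC, ha⟩, ⟨b, hbC, hb⟩⟩ := hcon
  have haR : πX xmax < πX a := (hside a (hnotS a haC)).resolve_left (by omega)
  have hbL : πX b < πX xmin := (hside b (hnotS b hbC)).resolve_right (by omega)
  have hreach := hCconn.preconnected ⟨Sum.inl b, hbC⟩ ⟨Sum.inl a, haC⟩
  have hgood : good (Sum.inl a) := hwalk _ _ hreach hbL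
  have : πX a < πX xmin := hgood
  have hmm : πX xmin ≤ πX xmax := hminLe xmax hmax
  omega
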